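/- For the path graph P_n with n ≥ 4, the 2-domination number equals n/2 + 1 if n is even, and (n-1)/2 + 1 if n is odd. -/

import Mathlib

open SimpleGraph

/-- `D` is a 2-dominating set of `G`: every vertex outside `D` has at least
two neighbors in `D`. -/
def IsTwoDomSet {V : Type*} (G : SimpleGraph V) (D : Set V) : Prop :=
  ∀ v ∉ D, 2 ≤ (G.neighborSet v ∩ D).ncard

/-- The 2-domination number `γ₂(G)`. -/
noncomputable def gamma2 {V : Type*} (G : SimpleGraph V) : ℕ :=
  sInf {k | ∃ D : Set V, IsTwoDomSet G D ∧ D.ncard = k}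

/-- The 2-domination stability `st_{γ₂}(G)`: the minimum number of vertices
whose removal changes the 2-domination number. -/
noncomputable def stGamma2 {V : Type*} (G : SimpleGraph V) : ℕ :=
  sInf {k | ∃ S : Set V, S.ncard = k ∧ gamma2 (G.induce Sᶜ) ≠ gamma2 G}

lemma key {n : ℕ} {D : Set (Fin n)} (hD : IsTwoDomSet (pathGraph n) D)
    {v : Fin n} (hv : v ∉ D) :
    ∃ h1 : 1 ≤ v.val, ∃ h2 : v.val + 1 < n,
      (⟨v.val - 1, by omega⟩ : Fin n) ∈ D ∧ (⟨v.val + 1, h2⟩ : Fin n) ∈ D := by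
  have h2 := hD v hv
  have hfin : ((pathGraph n).neighborSet v ∩ D).Finite := Set.toFinite _
  have h1 : 1 < ((pathGraph n).neighborSet v ∩ D).ncard := by omega
  obtain ⟨a, ⟨haadj, haD⟩, b, ⟨hbadj, hbD⟩, hab⟩ := (Set.one_lt_ncard hfin).mp h1
  rw [SimpleGraph.mem_neighborSet, pathGraph_adj] at haadj hbadj
  have hval : a.val ≠ b.val := fun h => hab (Fin.ext h)
  have hmain : ∃ a' ∈ D, ∃ b' ∈ D, a'.val + 1 = v.val ∧ v.val + 1 = b'.val := by
    rcases haadj with h1 | h1 <;> rcases hbadj with h2 | h2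
    · omega
    · exact ⟨b, hbD, a, haD, h2, h1⟩
    · exact ⟨a, haD, b, hbD, h1, h2⟩
    · omega
  obtain ⟨a, haD, b, hbD, ha, hb⟩ := hmain
  have hv2 : v.val + 1 < n := hb ▸ b.isLt
  refine ⟨by omega, hv2, ?_, ?_⟩
  · have : (⟨v.val - 1, by omega⟩ : Fin n) = a := Fin.ext (by simp; omega)
    rw [this]; exact haD
  · have : (⟨v.val + 1, hv2⟩ : Fin n) = b := Fin.ext (by simp; omega)
    rw [this]; exact hbD

theorem gamma2_pathGraph' (n : ℕ) (hn : 4 ≤ n) :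
    gamma2 (SimpleGraph.pathGraph n) = n / 2 + 1 := by
  classical
  -- Upper bound set
  set D₀ : Set (Fin n) := {v | Even v.val ∨ v.val = n - 1} with hD₀def
  have hdom : IsTwoDomSet (pathGraph n) D₀ := by
    intro v hv
    simp only [hD₀def, Set.mem_setOf_eq, not_or] at hv
    obtain ⟨hodd, hne⟩ := hv
    rw [Nat.not_even_iff] at hodd
    have h1 : 1 ≤ v.val := by omega
    have h2 : v.val + 1 < n := by have := v.isLt; omega
    have hfin : ((pathGraph n).neighborSet v ∩ D₀).Finite := Set.toFinite _
    have : 1 < ((pathGraph n).neighborSet v ∩ D₀).ncard := by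
      rw [Set.one_lt_ncard hfin]
      refine ⟨⟨v.val - 1, by omega⟩, ⟨?_, ?_⟩, ⟨v.val + 1, h2⟩, ⟨?_, ?_⟩, ?_⟩
      · rw [SimpleGraph.mem_neighborSet, pathGraph_adj]; right
        show v.val - 1 + 1 = v.val; omega
      · left; show Even (v.val - 1); rw [Nat.even_iff]; omega
      · rw [SimpleGraph.mem_neighborSet, pathGraph_adj]; left; rfl
      · left; show Even (v.val + 1); rw [Nat.even_iff]; omega
      · intro h
        have : v.val - 1 = v.val + 1 := congrArg Fin.val h
        omega
    omega
  have hcard : D₀.ncard = n / 2 + 1 := by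
    rw [Set.ncard_eq_toFinset_card']
    have : D₀.toFinset = Finset.univ.filter (fun v : Fin n => Even v.val ∨ v.val = n - 1) := by
      ext v; simp [hD₀def]
    rw [this]
    rw [show n / 2 + 1 = (Finset.range (n / 2 + 1)).card from (Finset.card_range _).symm]
    apply Finset.card_bij (fun v _ => if v.val = n - 1 then n / 2 else v.val / 2)
    · intro v hv
      simp only [Finset.mem_filter, Finset.mem_univ, true_and] at hv
      simp only [Finset.mem_range]
      split <;> omega
    · intro v hv w hw hvw
      simp only [Finset.mem_filter, Finset.mem_univ, true_and, Nat.even_iff] at hv hw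
      have hvn := v.isLt; have hwn := w.isLt
      apply Fin.ext
      by_cases h1 : v.val = n - 1 <;> by_cases h2 : w.val = n - 1 <;>
        simp [h1, h2] at hvw <;> omega
    · intro j hj
      simp only [Finset.mem_range] at hj
      by_cases h : j = n / 2
      · refine ⟨⟨n - 1, by omega⟩, ?_, ?_⟩
        · simp
        · simp [h]
      · refine ⟨⟨2 * j, by omega⟩, ?_, ?_⟩
        · simp only [Finset.mem_filter, Finset.mem_univ, true_and]
          left; show Even (2 * j); exact even_two_mul j
        · have h2j : 2 * j ≠ n - 1 := by omega
          simp only [if_neg h2j]; omega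
  have hmem : n / 2 + 1 ∈ {k | ∃ D : Set (Fin n), IsTwoDomSet (pathGraph n) D ∧ D.ncard = k} :=
    ⟨D₀, hdom, hcard⟩
  refine le_antisymm (Nat.sInf_le hmem) (le_csInf ⟨_, hmem⟩ ?_)
  rintro k ⟨D, hD, rfl⟩
  -- lower bound
  set C : Finset (Fin n) := Finset.univ.filter (fun v => v ∉ D) with hCdef
  have hcompl : D.ncard = n - C.card := by
    rw [Set.ncard_eq_toFinset_card']
    have : D.toFinset = Cᶜ := by ext v; simp [hCdef]
    rw [this, Finset.card_compl]
    simp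
  have hCle : C.card ≤ (n - 1) / 2 := by
    have h := Finset.card_le_card_of_injOn (s := C) (t := Finset.range ((n - 1) / 2))
      (fun v : Fin n => (v.val - 1) / 2) ?_ ?_
    · simpa using h
    · intro v hv
      simp only [hCdef, Finset.mem_coe, Finset.mem_filter, Finset.mem_univ, true_and] at hv
      obtain ⟨h1, h2, _, _⟩ := key hD hv
      simp only [Finset.mem_coe, Finset.mem_range]
      omega
    · intro v hv w hw hvw
      simp only [hCdef, Finset.coe_filter, Finset.mem_univ, true_and,
        Set.mem_setOf_eq] at hv hw
      obtain ⟨hv1, hv2, _, hvr⟩ := key hD hv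
      obtain ⟨hw1, hw2, _, hwr⟩ := key hD hw
      simp only at hvw
      apply Fin.ext
      by_contra hne
      rcases Nat.lt_or_ge v.val w.val with hlt | hge
      · have : w.val = v.val + 1 := by omega
        have : (⟨v.val + 1, hv2⟩ : Fin n) = w := Fin.ext (by simp [this])
        rw [this] at hvr; exact hw hvr
      · have : v.val = w.val + 1 := by omega
        have : (⟨w.val + 1, hw2⟩ : Fin n) = v := Fin.ext (by simp [this])
        rw [this] at hwr; exact hv hwr
  omega

theorem gamma2_pathGraph (n : ℕ) (hn : 4 ≤ n) :
    gamma2 (SimpleGraph.pathGraph n) =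
      if Even n then n / 2 + 1 else (n - 1) / 2 + 1 := by
  rw [gamma2_pathGraph' n hn]
  rcases Nat.even_or_odd n with h | h
  · simp [h]
  · rw [if_neg (Nat.not_even_iff_odd.mpr h)]
    obtain ⟨k, hk⟩ := h
    omega
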